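/- Let H_X be an integer matrix whose mod-2 reduction has linearly independent rows and assume H_X H_Z^T ≡ 0 (mod 2^{m+1}). Then for every θ_1 ∈ Z^n with H_X θ_1 ≡ 0 (mod 2), there exists a sequence θ_1, θ_2, ..., θ_{m+1} in Z^n with θ_{i+1} ≡ θ_i (mod 2^i) and H_X θ_i ≡ 0 (mod 2^i) for all i = 1, ..., m+1. -/

import Mathlib

open Matrix

lemma surj_aux {mX n : ℕ} (M : Matrix (Fin mX) (Fin n) (ZMod 2))
    (h : LinearIndependent (ZMod 2) (fun i => M i)) :
    Function.Surjective M.mulVec := by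
  have hinj : Function.Injective Mᵀ.mulVecLin := by
    have : Function.Injective Mᵀ.mulVec :=
      Matrix.mulVec_injective_iff.mpr (by simpa [Matrix.row] using h)
    simpa [Function.Injective, Matrix.mulVecLin_apply, Matrix.mulVec_transpose] using this
  have hrankT : Mᵀ.rank = mX := by
    have := Mᵀ.mulVecLin.finrank_range_add_finrank_ker
    rw [LinearMap.ker_eq_bot.mpr hinj, finrank_bot, add_zero] at this
    simpa [Matrix.rank] using this
  have hrank : M.rank = mX := by rw [← Matrix.rank_transpose, hrankT]
  have htop : LinearMap.range M.mulVecLin = ⊤ := by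
    apply Submodule.eq_top_of_finrank_eq
    rw [← Matrix.rank, hrank]
    simp
  intro v
  obtain ⟨x, hx⟩ := (LinearMap.range_eq_top.mp htop) v
  exact ⟨x, hx⟩

lemma cast_mulVec {mX n : ℕ} (M : Matrix (Fin mX) (Fin n) ℤ) (x : Fin n → ℤ) (k : Fin mX) :
    ((M.mulVec x k : ℤ) : ZMod 2) =
      (M.map (Int.cast : ℤ → ZMod 2)).mulVec (fun j => ((x j : ℤ) : ZMod 2)) k := by
  simp [Matrix.mulVec, dotProduct]

/-- One lifting step. -/
lemma step {mX n : ℕ} (HX : Matrix (Fin mX) (Fin n) ℤ)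
    (hrows : LinearIndependent (ZMod 2)
      (fun i => (HX.map (Int.cast : ℤ → ZMod 2)) i))
    (i : ℕ) (θ : Fin n → ℤ) (hθ : ∀ k, (2 ^ i : ℤ) ∣ HX.mulVec θ k) :
    ∃ θ' : Fin n → ℤ, (∀ j, (2 ^ i : ℤ) ∣ θ' j - θ j) ∧
      (∀ k, (2 ^ (i + 1) : ℤ) ∣ HX.mulVec θ' k) := by
  set M := HX.map (Int.cast : ℤ → ZMod 2)
  set v : Fin mX → ℤ := fun k => HX.mulVec θ k / 2 ^ i with hv
  have hvdef : ∀ k, HX.mulVec θ k = 2 ^ i * v k := fun k =>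
    (Int.mul_ediv_cancel' (hθ k)).symm
  obtain ⟨x, hx⟩ := surj_aux M hrows (fun k => -((v k : ℤ) : ZMod 2))
  set y : Fin n → ℤ := fun j => ((x j).val : ℤ)
  have hy : ∀ j, ((y j : ℤ) : ZMod 2) = x j := by
    intro j; simp [y]
  refine ⟨fun j => θ j + 2 ^ i * y j, ?_, ?_⟩
  · intro j; simp
  · intro k
    have hlin : HX.mulVec (fun j => θ j + 2 ^ i * y j) k
        = HX.mulVec θ k + 2 ^ i * HX.mulVec y k := by
      simp [Matrix.mulVec, dotProduct, mul_add, Finset.sum_add_distrib,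
        Finset.mul_sum, mul_comm, mul_left_comm]
    rw [hlin, hvdef k, ← mul_add, pow_succ,
      mul_dvd_mul_iff_left (pow_ne_zero i (two_ne_zero (α := ℤ)))]
    have h2 : ((v k + HX.mulVec y k : ℤ) : ZMod 2) = 0 := by
        push_cast
        rw [cast_mulVec]
        have : (fun j => ((y j : ℤ) : ZMod 2)) = x := funext hy
        rw [this, hx]
        ring
    exact (ZMod.intCast_zmod_eq_zero_iff_dvd _ 2).mp h2

/-- Iterated multi-level lifting: with linearly independent rows of `H_X` mod 2 and
commutativity mod `2^(m+1)`, any mod-2 cycle extends to a sequence of compatible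
mod-`2^i` cycles for `i = 1, …, m+1`. -/
theorem stmt6 (mX mZ n m : ℕ) (hm : 1 ≤ m)
    (HX : Matrix (Fin mX) (Fin n) ℤ) (HZ : Matrix (Fin mZ) (Fin n) ℤ)
    (hrows : LinearIndependent (ZMod 2)
      (fun i => (HX.map (Int.cast : ℤ → ZMod 2)) i))
    (hcomm : ∀ i k, (2 ^ (m + 1) : ℤ) ∣ (HX * HZ.transpose) i k)
    (θ1 : Fin n → ℤ) (hθ1 : ∀ i, (2 : ℤ) ∣ HX.mulVec θ1 i) :
    ∃ T : ℕ → (Fin n → ℤ),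
      T 1 = θ1 ∧
      (∀ i, 1 ≤ i → i ≤ m → ∀ j, (2 ^ i : ℤ) ∣ T (i + 1) j - T i j) ∧
      (∀ i, 1 ≤ i → i ≤ m + 1 → ∀ k, (2 ^ i : ℤ) ∣ HX.mulVec (T i) k) := by
  -- define T recursively using choice
  have key : ∀ θ i, (∀ k, (2 ^ i : ℤ) ∣ HX.mulVec θ k) →
      ∃ θ' : Fin n → ℤ, (∀ j, (2 ^ i : ℤ) ∣ θ' j - θ j) ∧
        (∀ k, (2 ^ (i + 1) : ℤ) ∣ HX.mulVec θ' k) := fun θ i h => step HX hrows i θ h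
  -- build sequence: T 0 = θ1, T 1 = θ1, T (i+1) lifts T i
  let next : ℕ → (Fin n → ℤ) → (Fin n → ℤ) := fun i θ =>
    if h : ∀ k, (2 ^ i : ℤ) ∣ HX.mulVec θ k then (key θ i h).choose else θ
  let T : ℕ → (Fin n → ℤ) := fun i => Nat.rec θ1 (fun j prev => if j = 0 then θ1 else next j prev) i
  have hT1 : T 1 = θ1 := by simp [T]
  -- invariant: for 1 ≤ i, (∀ k, 2^i ∣ HX.mulVec (T i) k)
  have inv : ∀ i, 1 ≤ i → ∀ k, (2 ^ i : ℤ) ∣ HX.mulVec (T i) k := by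
    intro i hi
    induction i with
    | zero => omega
    | succ j ih =>
      rcases Nat.eq_or_lt_of_le hi with h1 | h1
      · have hj : j = 0 := by omega
        subst hj
        intro k
        have hT : T (0 + 1) = θ1 := hT1
        rw [hT]
        simpa using hθ1 k
      · have hj1 : 1 ≤ j := by omega
        have hdiv := ih hj1
        have hTs : T (j + 1) = next j (T j) := by
          have : j ≠ 0 := by omega
          simp [T, this]
        rw [hTs]
        simp only [next, dif_pos hdiv]
        exact (key (T j) j hdiv).choose_spec.2
  have compat : ∀ i, 1 ≤ i → ∀ j, (2 ^ i : ℤ) ∣ T (i + 1) j - T i j := by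
    intro i hi j
    have hdiv := inv i hi
    have hTs : T (i + 1) = next i (T i) := by
      have : i ≠ 0 := by omega
      simp [T, this]
    rw [hTs]
    simp only [next, dif_pos hdiv]
    exact (key (T i) i hdiv).choose_spec.1 j
  exact ⟨T, hT1, fun i hi _ j => compat i hi j, fun i hi _ k => inv i hi k⟩
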